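/- Let B be a commutative ring, let x, y ∈ B satisfy Bx + By = B, let α ⊆ B be an ideal, and let ν_1,…,ν_p ⊆ B be prime ideals. Suppose that for every element a ∈ α there exists c_0 ∈ ℕ such that x + a·y^c ∈ ν_1 ∪ ⋯ ∪ ν_p for every c ≥ c_0. Then Bx + α ⊆ ν_i for some i ∈ {1,…,p}. -/

import Mathlib

open scoped Pointwise


private theorem coavoid_cover_contradiction
    {B : Type*} [CommRing B] (s : Finset (Ideal B)) (σ : Ideal B → B)
    (hprime : ∀ P ∈ s, P.IsPrime)
    (hcov : ∀ b : B, ∃ P ∈ s, b - σ P ∈ P) : False := by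
  classical
  have hcovers : ⋃ P ∈ s, σ P +ᵥ ((Submodule.toAddSubgroup P : AddSubgroup B) : Set B)
      = Set.univ := by
    rw [Set.eq_univ_iff_forall]
    intro b
    obtain ⟨P, hPs, hbP⟩ := hcov b
    refine Set.mem_biUnion hPs ?_
    rw [Set.mem_vadd_set_iff_neg_vadd_mem, vadd_eq_add, neg_add_eq_sub]
    exact hbP
  have hcovers' := AddSubgroup.leftCoset_cover_filter_FiniteIndex (G := B) hcovers
  have hmax : ∀ P ∈ s.filter (fun P : Ideal B => (Submodule.toAddSubgroup P).FiniteIndex),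
      (P : Ideal B).IsMaximal := by
    intro P hP
    rw [Finset.mem_filter] at hP
    obtain ⟨hPs, hfi⟩ := hP
    haveI := hfi
    haveI : Finite (B ⧸ P) := AddSubgroup.finite_quotient_of_finiteIndex (H := Submodule.toAddSubgroup P)
    haveI : (P : Ideal B).IsPrime := hprime P hPs
    exact Ideal.Quotient.maximal_of_isField _ (Finite.isDomain_to_isField _)
  set sf := s.filter (fun P : Ideal B => (Submodule.toAddSubgroup P).FiniteIndex) with hsf
  have hpair : Pairwise (Function.onFun IsCoprime fun P : {P // P ∈ sf} => (P : Ideal B)) := by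
    intro P Q hne
    exact Ideal.isCoprime_iff_sup_eq.mpr
      ((hmax P P.2).coprime_of_ne (hmax Q Q.2) (fun hPQ => hne (Subtype.ext hPQ)))
  obtain ⟨q, hq⟩ := Ideal.quotientInfToPiQuotient_surj hpair
      (fun P : {P // P ∈ sf} => Ideal.Quotient.mk _ (σ (P : Ideal B) + 1))
  obtain ⟨z, rfl⟩ := Ideal.Quotient.mk_surjective q
  have hz : ∀ P : {P // P ∈ sf}, z - (σ (P : Ideal B) + 1) ∈ (P : Ideal B) := by
    intro P
    have h2 := congrFun hq P
    rw [Ideal.quotientInfToPiQuotient_mk'] at h2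
    exact (Ideal.Quotient.eq).mp h2
  have hzu : z ∈ ⋃ P ∈ sf, σ P +ᵥ ((Submodule.toAddSubgroup P : AddSubgroup B) : Set B) := by
    rw [hcovers']
    exact Set.mem_univ z
  rw [Set.mem_iUnion₂] at hzu
  obtain ⟨P, hP, hzP⟩ := hzu
  rw [Set.mem_vadd_set_iff_neg_vadd_mem, vadd_eq_add, neg_add_eq_sub] at hzP
  have hzP' : z - σ P ∈ P := hzP
  have h1 : (1 : B) ∈ P := by
    have h3 := P.sub_mem hzP' (hz ⟨P, hP⟩)
    have h4 : z - σ P - (z - (σ P + 1)) = 1 := by ring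
    rwa [h4] at h3
  have hPs : P ∈ s := (Finset.mem_filter.mp hP).1
  exact (hprime P hPs).ne_top ((Ideal.eq_top_iff_one _).mpr h1)

/-- Co-avoidance lemma: if `x + α y^∞` is contained in a finite union of primes,
then `Bx + α` is contained in one of them. -/
theorem coavoidance
    {B : Type*} [CommRing B] (x y : B) (hxy : Ideal.span {x, y} = ⊤)
    (α : Ideal B) (p : ℕ) (ν : Fin p → Ideal B) (hν : ∀ i, (ν i).IsPrime)
    (h : ∀ a ∈ α, ∃ c₀ : ℕ, ∀ c : ℕ, c₀ ≤ c → ∃ i, x + a * y ^ c ∈ ν i) :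
    ∃ i, Ideal.span {x} ⊔ α ≤ ν i := by
  classical
  by_contra hcon
  push_neg at hcon
  have hcon' : ∀ i, x ∈ ν i → ¬ α ≤ ν i := by
    intro i hx hα
    exact hcon i (sup_le ((Ideal.span_singleton_le_iff_mem _).2 hx) hα)
  have hyS : ∀ i, x ∈ ν i → y ∉ ν i := by
    intro i hx hy
    have hle : Ideal.span {x, y} ≤ ν i := by
      rw [Ideal.span_le]
      rintro z hz
      simp only [Set.mem_insert_iff, Set.mem_singleton_iff] at hz
      rcases hz with rfl | rfl
      · exact hx
      · exact hy
    rw [hxy] at hle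
    exact (hν i).ne_top (top_le_iff.mp hle)
  -- choose a ∈ α avoiding all primes containing x
  obtain ⟨a, ha, haS⟩ : ∃ a ∈ α, ∀ i, x ∈ ν i → a ∉ ν i := by
    by_cases hS : ∃ i₀, x ∈ ν i₀
    · obtain ⟨i₀, _⟩ := hS
      have hnsub : ¬ ((α : Set B) ⊆ ⋃ i ∈ ((Finset.univ.filter (fun i => x ∈ ν i) :
          Finset (Fin p)) : Set (Fin p)), ν i) := by
        rw [Ideal.subset_union_prime i₀ i₀ (fun i _ _ _ => hν i)]
        rintro ⟨i, hi, hle⟩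
        exact hcon' i (by simpa using hi) hle
      rw [Set.not_subset] at hnsub
      obtain ⟨a, haα, ha2⟩ := hnsub
      refine ⟨a, haα, fun i hx hai => ha2 ?_⟩
      exact Set.mem_biUnion (by simp [hx]) hai
    · exact ⟨0, α.zero_mem, fun i hx _ => hS ⟨i, hx⟩⟩
  -- basic facts about covering primes
  have key : ∀ m : B, (∀ i, x ∈ ν i → m ∉ ν i) → ∀ c : ℕ, 1 ≤ c → ∀ j,
      x + m * a * y ^ c ∈ ν j → x ∉ ν j ∧ y ∉ ν j ∧ m * a ∉ ν j := by
    intro m hm c hc j hj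
    have hxj : x ∉ ν j := by
      intro hx
      have h1 : m * a * y ^ c ∈ ν j := by
        have h2 := (ν j).sub_mem hj hx
        simpa using h2
      rcases (hν j).mem_or_mem h1 with h2 | hyc
      · rcases (hν j).mem_or_mem h2 with h3 | h4
        · exact hm j hx h3
        · exact haS j hx h4
      · exact hyS j hx ((hν j).mem_of_pow_mem c hyc)
    have hyj : y ∉ ν j := by
      intro hy
      have h1 : m * a * y ^ c ∈ ν j :=
        (ν j).mul_mem_left _ (Ideal.pow_mem_of_mem _ hy c hc)
      have h2 := (ν j).sub_mem hj h1
      simp only [add_sub_cancel_right] at h2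
      exact hxj h2
    refine ⟨hxj, hyj, fun hma => ?_⟩
    have h1 : m * a * y ^ c ∈ ν j := (ν j).mul_mem_right _ hma
    have h2 := (ν j).sub_mem hj h1
    simp only [add_sub_cancel_right] at h2
    exact hxj h2
  -- root-of-unity exponents
  let Q : Fin p → Prop := fun j => ∃ e : ℕ, 0 < e ∧ y ^ e - 1 ∈ ν j
  let d : Fin p → ℕ := fun j => if hq : Q j then hq.choose else 1
  have hdpos : ∀ j, 0 < d j := by
    intro j
    by_cases hq : Q j
    · simp only [d, dif_pos hq]
      exact hq.choose_spec.1
    · simp [d, dif_neg hq]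
  have hdmem : ∀ j, Q j → y ^ (d j) - 1 ∈ ν j := by
    intro j hq
    simp only [d, dif_pos hq]
    exact hq.choose_spec.2
  set D : ℕ := ∏ j, d j with hD
  have hDpos : 0 < D := Finset.prod_pos (fun j _ => hdpos j)
  have hdD : ∀ j, d j ∣ D := fun j => Finset.dvd_prod_of_mem _ (Finset.mem_univ j)
  -- the key claim
  have dagger : ∀ m : B, (∀ i, x ∈ ν i → m ∉ ν i) → ∃ j, x ∉ ν j ∧ x + m * a ∈ ν j := by
    intro m hm
    obtain ⟨c₀, hc₀⟩ := h (m * a) (α.mul_mem_left m ha)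
    have hcov : ∀ t : Fin (p + 1), ∃ j, x + m * a * y ^ (D * (c₀ + 1 + t)) ∈ ν j := by
      intro t
      refine hc₀ (D * (c₀ + 1 + t)) ?_
      calc c₀ ≤ c₀ + 1 + t := by omega
        _ = 1 * (c₀ + 1 + t) := (one_mul _).symm
        _ ≤ D * (c₀ + 1 + t) := Nat.mul_le_mul_right _ hDpos
    choose f hf using hcov
    have main : ∀ t t' : Fin (p + 1), (t : ℕ) < (t' : ℕ) → f t = f t' →
        ∃ j, x ∉ ν j ∧ x + m * a ∈ ν j := by
      intro t t' htt hff
      set j := f t with hj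
      set c : ℕ := D * (c₀ + 1 + t) with hc
      set e : ℕ := D * ((t' : ℕ) - (t : ℕ)) with he
      have hepos : 0 < e := Nat.mul_pos hDpos (by omega)
      have hcpos : 1 ≤ c := by
        have : 1 ≤ c₀ + 1 + (t : ℕ) := by omega
        calc 1 = 1 * 1 := rfl
          _ ≤ D * (c₀ + 1 + t) := Nat.mul_le_mul hDpos this
      have hj1 : x + m * a * y ^ c ∈ ν j := hf t
      have hj2 : x + m * a * y ^ (c + e) ∈ ν j := by
        have hce : D * (c₀ + 1 + (t' : ℕ)) = c + e := by
          rw [hc, he, ← Nat.mul_add]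
          congr 1
          omega
        have h2 := hf t'
        rw [← hff, hce] at h2
        exact h2
      obtain ⟨hxj, hyj, hmaj⟩ := key m hm c hcpos j hj1
      have hdiff : m * a * y ^ c * (y ^ e - 1) ∈ ν j := by
        have h2 := (ν j).sub_mem hj2 hj1
        have h3 : x + m * a * y ^ (c + e) - (x + m * a * y ^ c)
            = m * a * y ^ c * (y ^ e - 1) := by
          rw [pow_add]; ring
        rwa [h3] at h2
      have hye : y ^ e - 1 ∈ ν j := by
        rcases (hν j).mem_or_mem hdiff with h2 | h2
        · exfalso
          rcases (hν j).mem_or_mem h2 with h3 | h3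
          · exact hmaj h3
          · exact hyj ((hν j).mem_of_pow_mem c h3)
        · exact h2
      have hQj : Q j := ⟨e, hepos, hye⟩
      have hdj : y ^ (d j) - 1 ∈ ν j := hdmem j hQj
      have hdc : d j ∣ c := (hdD j).trans (Dvd.intro _ rfl)
      have hyc1 : y ^ c - 1 ∈ ν j := by
        obtain ⟨k, hk⟩ := hdc
        have hdvd : y ^ (d j) - 1 ∣ y ^ c - 1 := by
          have h2 := sub_dvd_pow_sub_pow (y ^ (d j)) 1 k
          rwa [one_pow, ← pow_mul, ← hk] at h2
        obtain ⟨w, hw⟩ := hdvd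
        rw [hw]
        exact (ν j).mul_mem_right _ hdj
      refine ⟨j, hxj, ?_⟩
      have h2 := (ν j).sub_mem hj1 ((ν j).mul_mem_left (m * a) hyc1)
      have h3 : x + m * a * y ^ c - m * a * (y ^ c - 1) = x + m * a := by ring
      rwa [h3] at h2
    obtain ⟨t₁, t₂, hne, hft⟩ := Fintype.exists_ne_map_eq_of_card_lt f (by simp)
    rcases lt_or_gt_of_ne (fun hv : (t₁ : ℕ) = (t₂ : ℕ) => hne (Fin.ext hv)) with hlt | hlt
    · exact main t₁ t₂ hlt hft
    · exact main t₂ t₁ hlt hft.symm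
  -- build the coset cover and contradict
  let σ : Ideal B → B := fun P => if hP : ∃ m, x + m * a ∈ P then hP.choose else 0
  have hσ : ∀ P : Ideal B, (hP : ∃ m, x + m * a ∈ P) → x + σ P * a ∈ P := by
    intro P hP
    simp only [σ, dif_pos hP]
    exact hP.choose_spec
  refine coavoid_cover_contradiction (Finset.univ.image ν) σ ?_ ?_
  · intro P hP
    obtain ⟨i, _, rfl⟩ := Finset.mem_image.mp hP
    exact hν i
  · intro b
    by_cases hbM : ∃ i, x ∈ ν i ∧ b ∈ ν i
    · obtain ⟨i, hxi, hbi⟩ := hbM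
      refine ⟨ν i, Finset.mem_image.mpr ⟨i, Finset.mem_univ i, rfl⟩, ?_⟩
      have hσi : σ (ν i) ∈ ν i := by
        by_cases hP : ∃ m, x + m * a ∈ ν i
        · have h1 := hσ (ν i) hP
          have h2 := (ν i).sub_mem h1 hxi
          simp only [add_sub_cancel_left] at h2
          rcases (hν i).mem_or_mem h2 with h3 | h3
          · exact h3
          · exact absurd h3 (haS i hxi)
        · simp [σ, dif_neg hP]
      exact (ν i).sub_mem hbi hσi
    · push_neg at hbM
      obtain ⟨j, hxj, hbj⟩ := dagger b (fun i hx => hbM i hx)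
      have hP : ∃ m, x + m * a ∈ ν j := ⟨b, hbj⟩
      refine ⟨ν j, Finset.mem_image.mpr ⟨j, Finset.mem_univ j, rfl⟩, ?_⟩
      have h1 := (ν j).sub_mem hbj (hσ (ν j) hP)
      have h2 : x + b * a - (x + σ (ν j) * a) = (b - σ (ν j)) * a := by ring
      rw [h2] at h1
      rcases (hν j).mem_or_mem h1 with h3 | h3
      · exact h3
      · exfalso
        have h4 := (ν j).sub_mem hbj ((ν j).mul_mem_left b h3)
        simp only [add_sub_cancel_right] at h4
        exact hxj h4
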